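/- Let λ be an infinite cardinal and μ an infinite cardinal with μ ≤ λ. If λ⁺ ↠_{Q¹} μ holds, then μ is a successor cardinal (and in particular μ is regular). -/

import Mathlib

/- Magidor–Malitz quantifier machinery -/

open FirstOrder Cardinal

universe u

namespace MMPaper

def QSat {L : FirstOrder.Language.{u, u}} {M : Type u} [L.Structure M] (n : ℕ)
    (φ : L.Formula (Fin n ⊕ ℕ)) (p : ℕ → M) : Prop :=
  ∃ A : Set M, #A = #M ∧
    ∀ a : Fin n → M, (∀ i, a i ∈ A) → φ.Realize (Sum.elim a p)

def QElem {L : FirstOrder.Language.{u, u}} {M : Type u} [L.Structure M] (n : ℕ)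
    (N : L.ElementarySubstructure M) : Prop :=
  ∀ (φ : L.Formula (Fin n ⊕ ℕ)) (p : ℕ → N),
    QSat n φ p ↔ QSat n φ (fun i => (p i : M))

def QRef (n : ℕ) (lam mu eta : Cardinal.{u}) : Prop :=
  ∀ (L : FirstOrder.Language.{u, u}), L.card ≤ eta →
    ∀ (M : Type u) [L.Structure M], #M = lam →
      ∃ N : L.ElementarySubstructure M, QElem n N ∧ #N = mu


open Ordinal

instance iwoToType (o : Ordinal.{u}) : IsWellOrder o.ToType (· < ·) := isWellOrder_lt

instance iwoSubtype {α : Type u} [LinearOrder α] [WellFoundedLT α] (p : α → Prop) :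
    IsWellOrder (Subtype p) (· < ·) := isWellOrder_lt

noncomputable section

variable (lam : Cardinal.{u})

abbrev Mt : Type u := (Order.succ lam).ord.ToType

/-- the order relation on `Mt lam`, with full type annotation. -/
abbrev rM : Mt lam → Mt lam → Prop := (· < ·)

lemma mk_Mt : #(Mt lam) = Order.succ lam := by
  rw [Cardinal.mk_toType, Cardinal.card_ord]

def SSet : Set (Mt lam) := {x | Ordinal.typein (rM lam) x < lam.ord}

lemma lam_ord_le : lam.ord ≤ (Order.succ lam).ord :=
  Cardinal.ord_le_ord.2 (Order.le_succ lam)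

lemma mk_SSet_le : #(SSet lam) ≤ lam := by
  have h : #(SSet lam) ≤ #(lam.ord.ToType) := ?_
  · rwa [Cardinal.mk_toType, Cardinal.card_ord] at h
  refine Cardinal.mk_le_of_injective (f := fun x : SSet lam =>
    Ordinal.enum ((· < ·) : lam.ord.ToType → lam.ord.ToType → Prop)
      ⟨Ordinal.typein (rM lam) (x : Mt lam), by rw [Ordinal.type_toType]; exact x.2⟩) ?_
  intro x y hxy
  have := Ordinal.enum_inj.mp hxy
  exact Subtype.ext (Ordinal.typein_injective _ (congrArg Subtype.val this))

lemma mk_SSet_ge : lam ≤ #(SSet lam) := by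
  conv_lhs => rw [← Cardinal.card_ord lam, ← Cardinal.mk_toType]
  refine Cardinal.mk_le_of_injective (f := fun y : lam.ord.ToType =>
    (⟨Ordinal.enum (rM lam)
      ⟨Ordinal.typein ((· < ·) : lam.ord.ToType → lam.ord.ToType → Prop) y,
        lt_of_lt_of_le (Ordinal.typein_lt_self y)
          ((lam_ord_le lam).trans_eq (Ordinal.type_toType _).symm)⟩, by
      simp only [SSet, Set.mem_setOf_eq, Ordinal.typein_enum]
      exact Ordinal.typein_lt_self y⟩ : SSet lam)) ?_
  intro x y hxy
  have := Ordinal.enum_inj.mp (congrArg Subtype.val hxy)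
  exact Ordinal.typein_injective _ (congrArg Subtype.val this)

lemma mk_seg_le (b : Mt lam) : #{x : Mt lam // x < b} ≤ lam := by
  have h1 : #{x : Mt lam // x < b} = (Ordinal.typein (rM lam) b).card :=
    Ordinal.card_typein b
  rw [h1]
  have h2 : Ordinal.typein (rM lam) b < (Order.succ lam).ord := by
    conv_rhs => rw [← Ordinal.type_toType (Order.succ lam).ord]
    exact Ordinal.typein_lt_type _ b
  exact Order.lt_succ_iff.mp (Cardinal.lt_ord.mp h2)

/-- choice of an injection of each initial segment into `SSet`. -/
def emb (b : Mt lam) : {x : Mt lam // x < b} ↪ SSet lam :=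
  ((Cardinal.le_def _ _).mp ((mk_seg_le lam b).trans (mk_SSet_ge lam))).some

def Ff (x b : Mt lam) : Mt lam :=
  if h : x < b then (emb lam b ⟨x, h⟩ : Mt lam) else x

lemma Ff_mem {x b : Mt lam} (h : x < b) : Ff lam x b ∈ SSet lam := by
  rw [Ff, dif_pos h]; exact (emb lam b ⟨x, h⟩).2

lemma Ff_inj {x y b : Mt lam} (hx : x < b) (hy : y < b) (h : Ff lam x b = Ff lam y b) :
    x = y := by
  rw [Ff, Ff, dif_pos hx, dif_pos hy] at h
  have := (emb lam b).injective (Subtype.ext h)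
  exact congrArg Subtype.val this

lemma natCast_lt_type (hlam : ℵ₀ ≤ lam) (n : ℕ) :
    (n : Ordinal) < Ordinal.type (rM lam) := by
  rw [Ordinal.type_toType]
  calc (n : Ordinal) < Ordinal.omega0 := Ordinal.nat_lt_omega0 n
  _ ≤ lam.ord := by rw [← Cardinal.ord_aleph0]; exact Cardinal.ord_le_ord.2 hlam
  _ ≤ _ := lam_ord_le lam

def cn (hlam : ℵ₀ ≤ lam) (n : ℕ) : Mt lam :=
  Ordinal.enum (rM lam) ⟨(n : Ordinal), natCast_lt_type lam hlam n⟩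

lemma cn_mem_SSet (hlam : ℵ₀ ≤ lam) (n : ℕ) : cn lam hlam n ∈ SSet lam := by
  simp only [SSet, cn, Set.mem_setOf_eq, Ordinal.typein_enum]
  calc (n : Ordinal) < Ordinal.omega0 := Ordinal.nat_lt_omega0 n
  _ ≤ lam.ord := by rw [← Cardinal.ord_aleph0]; exact Cardinal.ord_le_ord.2 hlam

lemma cn_inj (hlam : ℵ₀ ≤ lam) : Function.Injective (cn lam hlam) := by
  intro m n h
  have := Ordinal.enum_inj.mp h
  have h2 : ((m : Ordinal.{u})) = (n : Ordinal.{u}) := by simpa using Subtype.ext_iff.mp this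
  exact_mod_cast h2

end


def Lg : FirstOrder.Language.{u, u} where
  Functions n := (ULift.{u} ℕ × PLift (n = 0)) ⊕ PLift (n = 2)
  Relations n := ULift.{u} (PLift (n = 1))

lemma Lg_card : Lg.{u}.card ≤ ℵ₀ := by
  have : Countable Lg.{u}.Symbols := by
    unfold Language.Symbols Lg
    infer_instance
  exact Cardinal.mk_le_aleph0

/-- the distinguished unary relation symbol. -/
def pSym : Lg.{u}.Relations 1 := ULift.up (PLift.up rfl)
/-- the binary function symbol. -/
def fSym : Lg.{u}.Functions 2 := Sum.inr (PLift.up rfl)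
/-- constant symbols. -/
def cSym (k : ℕ) : Lg.{u}.Functions 0 := Sum.inl ⟨ULift.up k, PLift.up rfl⟩



noncomputable section
variable (lam : Cardinal.{u}) (hlam : ℵ₀ ≤ lam)

def Str (hlam : ℵ₀ ≤ lam) : Lg.{u}.Structure (Mt lam) where
  funMap {n} f x :=
    Sum.elim (fun c => cn lam hlam c.1.down)
      (fun h : PLift (n = 2) =>
        Ff lam (x ⟨0, h.down.symm ▸ (by norm_num : (0:ℕ) < 2)⟩)
          (x ⟨1, h.down.symm ▸ (by norm_num : (1:ℕ) < 2)⟩)) f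
  RelMap {n} r x := x ⟨0, r.down.down.symm ▸ Nat.zero_lt_one⟩ ∈ SSet lam

/-- the formula `P x₀`. -/
def phi : Lg.{u}.Formula (Fin 1 ⊕ ℕ) := pSym.formula₁ (FirstOrder.Language.Term.var (Sum.inl 0))

lemma funMap_fSym (a b : Mt lam) :
    @FirstOrder.Language.Structure.funMap Lg (Mt lam) (Str lam hlam) 2 fSym ![a, b]
      = Ff lam a b := rfl

lemma funMap_cSym (k : ℕ) (v : Fin 0 → Mt lam) :
    @FirstOrder.Language.Structure.funMap Lg (Mt lam) (Str lam hlam) 0 (cSym k) v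
      = cn lam hlam k := rfl

lemma realize_phi (v : Fin 1 ⊕ ℕ → Mt lam) :
    @FirstOrder.Language.Formula.Realize Lg (Mt lam) (Str lam hlam) _ phi v
      ↔ v (Sum.inl 0) ∈ SSet lam := by
  letI := Str lam hlam
  rw [phi, FirstOrder.Language.Formula.realize_rel₁]
  rfl

end

/-- If `λ⁺ ↠_{Q¹} μ` for infinite `μ ≤ λ`, then `μ` is a successor cardinal,
and in particular `μ` is regular. -/
theorem q1_reflection_target_is_successor (lam mu : Cardinal.{u})
    (hlam : ℵ₀ ≤ lam) (hmu : ℵ₀ ≤ mu) (hle : mu ≤ lam)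
    (h : QRef 1 (Order.succ lam) mu ℵ₀) :
    (∃ ν : Cardinal.{u}, mu = Order.succ ν) ∧ mu.IsRegular := by
  classical
  letI := Str lam hlam
  obtain ⟨N, hQ, hN⟩ := h Lg Lg_card (Mt lam) (mk_Mt lam)
  have hc : ∀ k : ℕ, cn lam hlam k ∈ N := by
    intro k
    have := N.toSubstructure.fun_mem (cSym k) (fun i => i.elim0) (fun i => i.elim0)
    rwa [funMap_cSym] at this
  set p : ℕ → N := fun _ => ⟨cn lam hlam 0, hc 0⟩ with hp
  have hMQ : ¬ QSat 1 phi (fun i => ((p i : Mt lam))) := by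
    rintro ⟨A, hA, hall⟩
    have hsub : A ⊆ SSet lam := by
      intro x hx
      have h1 := hall (fun _ => x) (fun _ => hx)
      rw [realize_phi] at h1
      exact h1
    have h2 : #A ≤ lam := le_trans (Cardinal.mk_le_mk_of_subset hsub) (mk_SSet_le lam)
    rw [hA, mk_Mt] at h2
    exact (Order.lt_succ lam).not_ge h2
  have hNQ : ¬ QSat 1 phi p := fun hs => hMQ ((hQ phi p).mp hs)
  set T : Set ↥N := {x : ↥N | (x : Mt lam) ∈ SSet lam} with hT
  have hTle : #T ≤ mu := hN ▸ Cardinal.mk_set_le T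
  have hTlt : #T < mu := by
    refine lt_of_le_of_ne hTle (fun hEq => hNQ ⟨T, by rw [hEq, hN], ?_⟩)
    intro a ha
    rw [← N.subtype.map_formula phi (Sum.elim a p), realize_phi]
    exact ha 0
  have hnu_inf : ℵ₀ ≤ #T := by
    have : Function.Injective (fun k : ℕ =>
        (⟨⟨cn lam hlam k, hc k⟩, cn_mem_SSet lam hlam k⟩ : T)) := by
      intro m n hmn
      exact cn_inj lam hlam (congrArg (fun z : T => (z : Mt lam)) hmn)
    exact Cardinal.aleph0_le_mk_iff.mpr (Infinite.of_injective _ this)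
  have hseg : ∀ b : ↥N, #{x : ↥N // x < b} ≤ #T := by
    intro b
    have hmem : ∀ x : {x : ↥N // x < b}, Ff lam ((x : ↥N) : Mt lam) (b : Mt lam) ∈ N := by
      intro x
      have := N.toSubstructure.fun_mem fSym ![((x : ↥N) : Mt lam), (b : Mt lam)] ?_
      · rwa [funMap_fSym] at this
      · intro i
        fin_cases i
        · exact ((x : ↥N)).2
        · exact b.2
    refine Cardinal.mk_le_of_injective (f := fun x : {x : ↥N // x < b} =>
      (⟨⟨Ff lam ((x : ↥N) : Mt lam) (b : Mt lam), hmem x⟩,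
        Ff_mem lam (Subtype.coe_lt_coe.mpr x.2)⟩ : T)) ?_
    intro x y hxy
    have h1 : Ff lam ((x : ↥N) : Mt lam) (b : Mt lam)
        = Ff lam ((y : ↥N) : Mt lam) (b : Mt lam) :=
      congrArg (fun z : T => ((z : ↥N) : Mt lam)) hxy
    have h2 := Ff_inj lam (Subtype.coe_lt_coe.mpr x.2) (Subtype.coe_lt_coe.mpr y.2) h1
    exact Subtype.ext (Subtype.ext h2)
  have hsucc_le : Order.succ (#T) ≤ mu := Order.succ_le_of_lt hTlt
  have hle2 : mu ≤ Order.succ (#T) := by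
    by_contra hcon
    push_neg at hcon
    have htau : mu.ord ≤ Ordinal.type ((· < ·) : ↥N → ↥N → Prop) := by
      rw [Cardinal.ord_le, Ordinal.card_type, hN]
    have h2 : (Order.succ (#T)).ord < Ordinal.type ((· < ·) : ↥N → ↥N → Prop) :=
      lt_of_lt_of_le (Cardinal.ord_lt_ord.2 hcon) htau
    set y := Ordinal.enum ((· < ·) : ↥N → ↥N → Prop) ⟨(Order.succ (#T)).ord, h2⟩ with hy
    have h3 : #{x : ↥N // x < y} = Order.succ (#T) := by
      rw [← Ordinal.card_typein (r := ((· < ·) : ↥N → ↥N → Prop)) y, hy, Ordinal.typein_enum, Cardinal.card_ord]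
    have h4 := hseg y
    rw [h3] at h4
    exact (Order.lt_succ (#T)).not_ge h4
  have hmueq : mu = Order.succ (#T) := le_antisymm hle2 hsucc_le
  exact ⟨⟨#T, hmueq⟩, hmueq ▸ Cardinal.isRegular_succ hnu_inf⟩

end MMPaper
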